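/- Let A and B be real symmetric n×n matrices such that 1 + A and 1 + B are positive definite. Then | (tr A − log det(1 + A)) − (tr B − log det(1 + B)) | ≤ ‖(1 + A)⁻¹‖·‖(1 + B)⁻¹‖·( ‖A‖_F + ‖B‖_F + ‖A‖_F·‖B‖_F )·‖A − B‖_F, and the same upper bound holds for | (log det(1 + A) − tr(A·(1 + A)⁻¹)) − (log det(1 + B) − tr(B·(1 + B)⁻¹)) |. If moreover A and B are positive semidefinite, then both left-hand sides are bounded above by (1/2)·( ‖A‖_F + ‖B‖_F )·‖A − B‖_F. -/

import Mathlib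

open Matrix Real

/-- The Frobenius (Hilbert–Schmidt) norm of a real matrix. -/
noncomputable def matFrobNorm {m n : Type*} [Fintype m] [Fintype n]
    (A : Matrix m n ℝ) : ℝ :=
  Real.sqrt (∑ i, ∑ j, (A i j) ^ 2)

/-- The operator norm of the linear map induced by a real square matrix on
Euclidean space. -/
noncomputable def matOpNorm {n : Type*} [Fintype n] [DecidableEq n]
    (A : Matrix n n ℝ) : ℝ :=
  ‖(Matrix.toEuclideanCLM (𝕜 := ℝ) A : EuclideanSpace ℝ n →L[ℝ] EuclideanSpace ℝ n)‖

set_option linter.unusedSectionVars false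
set_option linter.unusedVariables false
set_option maxHeartbeats 1000000

namespace HCLip
variable {n : Type*} [Fintype n] [DecidableEq n]

lemma frob_nonneg (A : Matrix n n ℝ) : 0 ≤ matFrobNorm A := Real.sqrt_nonneg _

lemma sum_sq_nonneg (A : Matrix n n ℝ) : 0 ≤ ∑ i, ∑ j, (A i j)^2 :=
  Finset.sum_nonneg fun _ _ => Finset.sum_nonneg fun _ _ => sq_nonneg _

lemma frob_sq (A : Matrix n n ℝ) : matFrobNorm A ^ 2 = ∑ i, ∑ j, (A i j)^2 :=
  Real.sq_sqrt (sum_sq_nonneg A)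

section frobInst
attribute [local instance] Matrix.frobeniusNormedAddCommGroup Matrix.frobeniusNormedSpace

lemma frob_eq_norm (A : Matrix n n ℝ) : matFrobNorm A = ‖A‖ := by
  rw [Matrix.frobenius_norm_def, matFrobNorm, Real.sqrt_eq_rpow]
  congr 1
  simp [Real.norm_eq_abs, sq_abs]

lemma frob_add_le (A B : Matrix n n ℝ) :
    matFrobNorm (A + B) ≤ matFrobNorm A + matFrobNorm B := by
  simp only [frob_eq_norm]; exact norm_add_le _ _

lemma frob_smul (c : ℝ) (A : Matrix n n ℝ) : matFrobNorm (c • A) = |c| * matFrobNorm A := by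
  simp only [frob_eq_norm]; rw [norm_smul]; simp [Real.norm_eq_abs]

lemma frob_neg (A : Matrix n n ℝ) : matFrobNorm (-A) = matFrobNorm A := by
  simp only [frob_eq_norm]; exact norm_neg _

end frobInst

lemma frob_sub_rev (A B : Matrix n n ℝ) : matFrobNorm (A - B) = matFrobNorm (B - A) := by
  rw [← frob_neg (A - B), neg_sub]

lemma frob_transpose (A : Matrix n n ℝ) : matFrobNorm Aᵀ = matFrobNorm A := by
  unfold matFrobNorm
  congr 1
  rw [Finset.sum_comm]
  simp [Matrix.transpose_apply]

lemma le_of_sq_le_sq {a b : ℝ} (hb : 0 ≤ b) (h : a^2 ≤ b^2) (ha : 0 ≤ a) : a ≤ b := by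
  nlinarith

/-- Cauchy–Schwarz for the trace pairing. -/
lemma trace_abs_le (X Y : Matrix n n ℝ) : |(X * Y).trace| ≤ matFrobNorm X * matFrobNorm Y := by
  have h1 : (X * Y).trace = ∑ p : n × n, X p.1 p.2 * Y p.2 p.1 := by
    rw [Fintype.sum_prod_type]
    simp [Matrix.trace, Matrix.diag, Matrix.mul_apply]
  have e1 : ∑ p : n × n, (X p.1 p.2)^2 = matFrobNorm X ^ 2 := by
    rw [frob_sq, Fintype.sum_prod_type]
  have e2 : ∑ p : n × n, (Y p.2 p.1)^2 = matFrobNorm Y ^ 2 := by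
    rw [frob_sq, Fintype.sum_prod_type, Finset.sum_comm]
  rw [h1]
  calc |∑ p : n × n, X p.1 p.2 * Y p.2 p.1|
      = Real.sqrt ((∑ p : n × n, X p.1 p.2 * Y p.2 p.1)^2) := (Real.sqrt_sq_eq_abs _).symm
    _ ≤ Real.sqrt ((∑ p : n × n, (X p.1 p.2)^2) * ∑ p : n × n, (Y p.2 p.1)^2) :=
        Real.sqrt_le_sqrt (Finset.sum_mul_sq_le_sq_mul_sq _ _ _)
    _ = Real.sqrt (matFrobNorm X ^ 2 * matFrobNorm Y ^ 2) := by rw [e1, e2]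
    _ = matFrobNorm X * matFrobNorm Y := by
        rw [Real.sqrt_mul (sq_nonneg _), Real.sqrt_sq (frob_nonneg X),
          Real.sqrt_sq (frob_nonneg Y)]

lemma norm_symm_pi (v : n → ℝ) :
    ‖(WithLp.equiv 2 (n → ℝ)).symm v‖ = Real.sqrt (∑ i, (v i)^2) := by
  rw [EuclideanSpace.norm_eq]
  congr 1
  refine Finset.sum_congr rfl fun i _ => ?_
  simp [WithLp.equiv_symm_apply, Real.norm_eq_abs, sq_abs]

lemma toEuclideanCLM_apply' (X : Matrix n n ℝ) (v : n → ℝ) :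
    (Matrix.toEuclideanCLM (𝕜 := ℝ) X) ((WithLp.equiv 2 (n → ℝ)).symm v)
      = (WithLp.equiv 2 (n → ℝ)).symm (X *ᵥ v) := by
  rw [WithLp.equiv_symm_apply, Matrix.toEuclideanCLM_toLp]

lemma mulVec_sqrt_le (X : Matrix n n ℝ) (v : n → ℝ) :
    Real.sqrt (∑ i, ((X *ᵥ v) i)^2) ≤ matOpNorm X * Real.sqrt (∑ i, (v i)^2) := by
  have h := (Matrix.toEuclideanCLM (𝕜 := ℝ) X).le_opNorm ((WithLp.equiv 2 (n → ℝ)).symm v)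
  rwa [toEuclideanCLM_apply', norm_symm_pi, norm_symm_pi] at h

lemma opNorm_le_of {X : Matrix n n ℝ} {c : ℝ} (hc : 0 ≤ c)
    (h : ∀ v : n → ℝ, Real.sqrt (∑ i, ((X *ᵥ v) i)^2) ≤ c * Real.sqrt (∑ i, (v i)^2)) :
    matOpNorm X ≤ c := by
  refine ContinuousLinearMap.opNorm_le_bound _ hc fun x => ?_
  have hx := toEuclideanCLM_apply' X (WithLp.equiv 2 (n → ℝ) x)
  rw [(WithLp.equiv 2 (n → ℝ)).symm_apply_apply] at hx
  have hnx : ‖x‖ = Real.sqrt (∑ i, ((WithLp.equiv 2 (n → ℝ)) x i)^2) := by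
    rw [← norm_symm_pi, (WithLp.equiv 2 (n → ℝ)).symm_apply_apply]
  rw [hx, norm_symm_pi, hnx]
  exact h _

lemma op_nonneg (X : Matrix n n ℝ) : 0 ≤ matOpNorm X := norm_nonneg _

lemma frob_mul_op_left (X Y : Matrix n n ℝ) :
    matFrobNorm (X * Y) ≤ matOpNorm X * matFrobNorm Y := by
  refine le_of_sq_le_sq (mul_nonneg (op_nonneg X) (frob_nonneg Y)) ?_ (frob_nonneg _)
  rw [frob_sq, Finset.sum_comm, mul_pow]
  have hcol : ∀ j, ∑ i, ((X * Y) i j)^2 ≤ matOpNorm X ^ 2 * ∑ i, (Y i j)^2 := by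
    intro j
    have h := mulVec_sqrt_le X (fun k => Y k j)
    have hXY : ∀ i, (X * Y) i j = (X *ᵥ fun k => Y k j) i := by
      intro i; simp [Matrix.mul_apply, Matrix.mulVec, dotProduct]
    have h2 : Real.sqrt (∑ i, ((X * Y) i j)^2) ≤ matOpNorm X * Real.sqrt (∑ i, (Y i j)^2) := by
      simpa [hXY] using h
    have h3 := pow_le_pow_left₀ (Real.sqrt_nonneg _) h2 2
    rwa [Real.sq_sqrt (Finset.sum_nonneg fun _ _ => sq_nonneg _), mul_pow,
      Real.sq_sqrt (Finset.sum_nonneg fun _ _ => sq_nonneg _)] at h3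
  calc ∑ j, ∑ i, ((X * Y) i j)^2 ≤ ∑ j, matOpNorm X ^ 2 * ∑ i, (Y i j)^2 :=
        Finset.sum_le_sum fun j _ => hcol j
    _ = matOpNorm X ^ 2 * ∑ j, ∑ i, (Y i j)^2 := by rw [Finset.mul_sum]
    _ = matOpNorm X ^ 2 * matFrobNorm Y ^ 2 := by rw [frob_sq, Finset.sum_comm]

lemma frob_transpose' (A : Matrix n n ℝ) : matFrobNorm Aᵀ = matFrobNorm A := by
  unfold matFrobNorm
  congr 1
  rw [Finset.sum_comm]
  simp [Matrix.transpose_apply]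

lemma frob_mul_op_right (X Y : Matrix n n ℝ) (hY : Yᵀ = Y) :
    matFrobNorm (X * Y) ≤ matFrobNorm X * matOpNorm Y := by
  rw [← frob_transpose' (X * Y), Matrix.transpose_mul, hY]
  calc matFrobNorm (Y * Xᵀ) ≤ matOpNorm Y * matFrobNorm Xᵀ := frob_mul_op_left _ _
    _ = matFrobNorm X * matOpNorm Y := by rw [frob_transpose', mul_comm]

lemma op_le_frob (X : Matrix n n ℝ) : matOpNorm X ≤ matFrobNorm X := by
  refine opNorm_le_of (frob_nonneg X) fun v => ?_
  have h : ∀ i, ((X *ᵥ v) i)^2 ≤ (∑ j, (X i j)^2) * (∑ j, (v j)^2) := by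
    intro i
    have := Finset.sum_mul_sq_le_sq_mul_sq Finset.univ (fun j => X i j) v
    simpa [Matrix.mulVec, dotProduct] using this
  calc Real.sqrt (∑ i, ((X *ᵥ v) i)^2)
      ≤ Real.sqrt (∑ i, (∑ j, (X i j)^2) * (∑ j, (v j)^2)) :=
        Real.sqrt_le_sqrt (Finset.sum_le_sum fun i _ => h i)
    _ = Real.sqrt ((∑ i, ∑ j, (X i j)^2) * (∑ j, (v j)^2)) := by rw [← Finset.sum_mul]
    _ = matFrobNorm X * Real.sqrt (∑ j, (v j)^2) := by
        rw [Real.sqrt_mul (sum_sq_nonneg X)]; rfl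


section l2
open scoped Matrix.Norms.L2Operator

lemma op_eq_norm (X : Matrix n n ℝ) : matOpNorm X = ‖X‖ := (Matrix.cstar_norm_def X).symm

lemma op_mul_le (X Y : Matrix n n ℝ) : matOpNorm (X * Y) ≤ matOpNorm X * matOpNorm Y := by
  simp only [op_eq_norm]; exact Matrix.l2_opNorm_mul X Y

lemma op_add_le (X Y : Matrix n n ℝ) : matOpNorm (X + Y) ≤ matOpNorm X + matOpNorm Y := by
  simp only [op_eq_norm]; exact norm_add_le _ _

lemma op_one [Nonempty n] : matOpNorm (1 : Matrix n n ℝ) = 1 := by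
  haveI : Nontrivial (EuclideanSpace ℝ n) := by
    refine ⟨⟨EuclideanSpace.single (Classical.arbitrary n) (1:ℝ), 0, ?_⟩⟩
    intro h
    have h2 := congrArg (fun x : EuclideanSpace ℝ n => x (Classical.arbitrary n)) h
    simp [EuclideanSpace.single_apply] at h2
  rw [matOpNorm, _root_.map_one, ContinuousLinearMap.one_def, ContinuousLinearMap.norm_id]

end l2

lemma psd_smul {X : Matrix n n ℝ} (hX : X.PosSemidef) {c : ℝ} (hc : 0 ≤ c) :
    (c • X).PosSemidef := by
  exact hX.smul hc

lemma psd_one_add_posDef {X : Matrix n n ℝ} (hX : X.PosSemidef) :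
    ((1 : Matrix n n ℝ) + X).PosDef :=
  Matrix.PosDef.add_posSemidef Matrix.PosDef.one hX

lemma trace_eq_sum_eigenvalues {T : Matrix n n ℝ} (hT : T.IsHermitian) :
    T.trace = ∑ i, hT.eigenvalues i := by
  rw [hT.trace_eq_sum_eigenvalues]
  simp

lemma log_det_le {T : Matrix n n ℝ} (hT : T.PosSemidef) (hdet : T.det ≠ 0) :
    Real.log T.det ≤ T.trace - Fintype.card n := by
  have hprod : T.det = ∏ i, hT.1.eigenvalues i := by
    rw [hT.1.det_eq_prod_eigenvalues]; simp
  have hne : ∀ i ∈ Finset.univ, hT.1.eigenvalues i ≠ (0:ℝ) := by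
    intro i _ h0
    exact hdet (by rw [hprod]; exact Finset.prod_eq_zero (Finset.mem_univ i) h0)
  have hpos : ∀ i, 0 < hT.1.eigenvalues i :=
    fun i => (hT.eigenvalues_nonneg i).lt_of_ne' (hne i (Finset.mem_univ i))
  rw [hprod, Real.log_prod hne, trace_eq_sum_eigenvalues hT.1]
  have hlog : ∀ i ∈ Finset.univ, Real.log (hT.1.eigenvalues i) ≤ hT.1.eigenvalues i - 1 :=
    fun i _ => Real.log_le_sub_one_of_pos (hpos i)
  calc ∑ i, Real.log (hT.1.eigenvalues i) ≤ ∑ i, (hT.1.eigenvalues i - 1) :=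
        Finset.sum_le_sum hlog
    _ = (∑ i, hT.1.eigenvalues i) - Fintype.card n := by
        rw [Finset.sum_sub_distrib]; simp [Finset.card_univ]

open scoped MatrixOrder in
lemma logdet_le_logdet_add {P Q : Matrix n n ℝ} (hP : P.PosDef) (hQ : Q.PosDef) :
    Real.log Q.det ≤ Real.log P.det + (P⁻¹ * Q).trace - Fintype.card n := by
  set S := CFC.sqrt P with hSdef
  have hS : S * S = P := CFC.sqrt_mul_sqrt_self P hP.posSemidef.nonneg
  have hSh : S.IsHermitian := (CFC.sqrt_nonneg P).posSemidef.1
  have hdetS : S.det * S.det = P.det := by rw [← Matrix.det_mul, hS]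
  have hdSne : S.det ≠ 0 := by
    intro h; rw [h, mul_zero] at hdetS; exact hP.det_pos.ne' hdetS.symm
  have hSinvH : (S⁻¹)ᴴ = S⁻¹ := hSh.inv
  set T := S⁻¹ * Q * S⁻¹ with hTdef
  have hTpsd : T.PosSemidef := by
    have h := hQ.posSemidef.mul_mul_conjTranspose_same S⁻¹
    rwa [hSinvH] at h
  have hdetT : T.det = Q.det / P.det := by
    rw [hTdef, Matrix.det_mul, Matrix.det_mul, Matrix.det_nonsing_inv, Ring.inverse_eq_inv,
      ← hdetS]
    field_simp
  have hdetTne : T.det ≠ 0 := by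
    rw [hdetT]; exact div_ne_zero hQ.det_pos.ne' hP.det_pos.ne'
  have htrT : T.trace = (P⁻¹ * Q).trace := by
    have hPinv : P⁻¹ = S⁻¹ * S⁻¹ := by rw [← hS, Matrix.mul_inv_rev]
    rw [hTdef, Matrix.trace_mul_cycle, hPinv, Matrix.mul_assoc]
  have key := log_det_le hTpsd hdetTne
  rw [hdetT, Real.log_div hQ.det_pos.ne' hP.det_pos.ne', htrT] at key
  linarith

lemma mul_one_add_inv {Z : Matrix n n ℝ} (hZ : ((1 : Matrix n n ℝ) + Z).PosDef) :
    Z * (1 + Z)⁻¹ = 1 - (1 + Z)⁻¹ := by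
  have hu : IsUnit ((1 : Matrix n n ℝ) + Z).det := hZ.det_pos.ne'.isUnit
  have h := Matrix.mul_nonsing_inv (1 + Z) hu
  rw [Matrix.add_mul, Matrix.one_mul] at h
  exact eq_sub_of_add_eq' h

lemma bregman_f {X Y : Matrix n n ℝ} (hX : ((1 : Matrix n n ℝ) + X).PosDef)
    (hY : ((1 : Matrix n n ℝ) + Y).PosDef) :
    (X.trace - Real.log ((1 + X).det)) - (Y.trace - Real.log ((1 + Y).det))
      ≤ ((X * (1 + X)⁻¹) * (X - Y)).trace := by
  have h7 := logdet_le_logdet_add hX hY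
  have hu : IsUnit ((1 : Matrix n n ℝ) + X).det := hX.det_pos.ne'.isUnit
  have htr : ((X * (1 + X)⁻¹) * (X - Y)).trace
      = X.trace - Y.trace - (Fintype.card n : ℝ) + ((1 + X)⁻¹ * (1 + Y)).trace := by
    rw [mul_one_add_inv hX, Matrix.sub_mul, Matrix.one_mul]
    have e2 : (1 + X)⁻¹ * (X - Y) = 1 - (1 + X)⁻¹ * (1 + Y) := by
      have e3 : (X : Matrix n n ℝ) - Y = (1 + X) - (1 + Y) := by abel
      rw [e3, Matrix.mul_sub, Matrix.nonsing_inv_mul _ hu]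
    rw [e2, Matrix.trace_sub, Matrix.trace_sub, Matrix.trace_sub, Matrix.trace_one]
    ring
  rw [htr]
  linarith


lemma isHermitian_transpose_eq {X : Matrix n n ℝ} (h : X.IsHermitian) : Xᵀ = X := by
  rw [← Matrix.conjTranspose_eq_transpose_of_trivial]; exact h

lemma inv_symm {X : Matrix n n ℝ} (hX : ((1:Matrix n n ℝ) + X).PosDef) :
    ((1 + X)⁻¹)ᵀ = (1 + X)⁻¹ := isHermitian_transpose_eq hX.inv.1

lemma psd_op_inv_le_one {X : Matrix n n ℝ} (hX : X.PosSemidef) :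
    matOpNorm ((1 + X)⁻¹) ≤ 1 := by
  have hPD := psd_one_add_posDef hX
  have hdet : IsUnit ((1:Matrix n n ℝ) + X).det := hPD.det_pos.ne'.isUnit
  refine opNorm_le_of zero_le_one fun v => ?_
  set y := (1 + X)⁻¹ *ᵥ v with hy
  have hv : (1 + X) *ᵥ y = v := by
    rw [hy, Matrix.mulVec_mulVec, Matrix.mul_nonsing_inv _ hdet, Matrix.one_mulVec]
  have h0 : 0 ≤ y ⬝ᵥ (X *ᵥ y) := by simpa using hX.dotProduct_mulVec_nonneg y
  have h1 : y ⬝ᵥ v = (∑ i, (y i)^2) + y ⬝ᵥ (X *ᵥ y) := by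
    rw [← hv, Matrix.add_mulVec, Matrix.one_mulVec, dotProduct_add]
    congr 1
    simp [dotProduct, sq]
  have hCS : y ⬝ᵥ v ≤ Real.sqrt (∑ i, (y i)^2) * Real.sqrt (∑ i, (v i)^2) := by
    simpa [dotProduct] using Real.sum_mul_le_sqrt_mul_sqrt Finset.univ y v
  have hs2 : Real.sqrt (∑ i, (y i)^2) ^ 2 = ∑ i, (y i)^2 :=
    Real.sq_sqrt (Finset.sum_nonneg fun _ _ => sq_nonneg _)
  have hs0 := Real.sqrt_nonneg (∑ i, (y i)^2)
  have ht0 := Real.sqrt_nonneg (∑ i, (v i)^2)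
  rw [one_mul]
  nlinarith [hs2, hs0, ht0, hCS, h0, h1]

lemma one_le_inv_factor [Nonempty n] {Y : Matrix n n ℝ} (hY : ((1:Matrix n n ℝ)+Y).PosDef) :
    1 ≤ matOpNorm ((1 + Y)⁻¹) * (1 + matFrobNorm Y) := by
  have hdet : IsUnit ((1:Matrix n n ℝ) + Y).det := hY.det_pos.ne'.isUnit
  have hmul := op_mul_le (1 + Y) (1 + Y)⁻¹
  rw [Matrix.mul_nonsing_inv _ hdet, op_one] at hmul
  have h2 : matOpNorm (1 + Y) ≤ 1 + matFrobNorm Y := by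
    calc matOpNorm (1 + Y) ≤ matOpNorm 1 + matOpNorm Y := op_add_le _ _
      _ = 1 + matOpNorm Y := by rw [op_one]
      _ ≤ 1 + matFrobNorm Y := by linarith [op_le_frob Y]
  calc (1:ℝ) ≤ matOpNorm (1 + Y) * matOpNorm ((1+Y)⁻¹) := hmul
    _ ≤ (1 + matFrobNorm Y) * matOpNorm ((1+Y)⁻¹) :=
        mul_le_mul_of_nonneg_right h2 (op_nonneg _)
    _ = matOpNorm ((1+Y)⁻¹) * (1 + matFrobNorm Y) := mul_comm _ _

lemma one_add_shift {Z : Matrix n n ℝ} : (1:Matrix n n ℝ) + ((1 + Z)⁻¹ - 1) = (1 + Z)⁻¹ := by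
  abel

lemma transform_val {Z : Matrix n n ℝ} (hZ : ((1:Matrix n n ℝ) + Z).PosDef) :
    ((1 + Z)⁻¹ - 1).trace - Real.log ((1 + ((1 + Z)⁻¹ - 1)).det)
      = Real.log ((1 + Z).det) - (Z * (1 + Z)⁻¹).trace := by
  have hu : IsUnit ((1:Matrix n n ℝ) + Z).det := hZ.det_pos.ne'.isUnit
  rw [one_add_shift, Matrix.det_nonsing_inv, Ring.inverse_eq_inv, Real.log_inv,
    Matrix.trace_sub, Matrix.trace_one, mul_one_add_inv hZ, Matrix.trace_sub, Matrix.trace_one]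
  ring

lemma transform_grad {Z : Matrix n n ℝ} (hZ : ((1:Matrix n n ℝ) + Z).PosDef) :
    ((1 + Z)⁻¹ - 1) * (1 + ((1 + Z)⁻¹ - 1))⁻¹ = -Z := by
  have hu : IsUnit ((1:Matrix n n ℝ) + Z).det := hZ.det_pos.ne'.isUnit
  rw [one_add_shift, Matrix.nonsing_inv_nonsing_inv _ hu, Matrix.sub_mul, Matrix.one_mul,
    Matrix.nonsing_inv_mul _ hu]
  abel

lemma inv_sub_inv' {P Q : Matrix n n ℝ} (hP : IsUnit P.det) (hQ : IsUnit Q.det) :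
    P⁻¹ - Q⁻¹ = P⁻¹ * (Q - P) * Q⁻¹ := by
  rw [Matrix.mul_sub, Matrix.nonsing_inv_mul _ hP, Matrix.sub_mul, Matrix.one_mul,
    Matrix.mul_assoc, Matrix.mul_nonsing_inv _ hQ, Matrix.mul_one]

lemma bregman_g {X Y : Matrix n n ℝ} (hX : ((1:Matrix n n ℝ) + X).PosDef)
    (hY : ((1:Matrix n n ℝ) + Y).PosDef) :
    (Real.log ((1 + X).det) - (X * (1 + X)⁻¹).trace)
      - (Real.log ((1 + Y).det) - (Y * (1 + Y)⁻¹).trace)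
      ≤ ((X * (1 + X)⁻¹) * ((X - Y) * (1 + Y)⁻¹)).trace := by
  have huX : IsUnit ((1:Matrix n n ℝ) + X).det := hX.det_pos.ne'.isUnit
  have huY : IsUnit ((1:Matrix n n ℝ) + Y).det := hY.det_pos.ne'.isUnit
  have hX' : ((1:Matrix n n ℝ) + ((1 + X)⁻¹ - 1)).PosDef := by
    rw [one_add_shift]; exact hX.inv
  have hY' : ((1:Matrix n n ℝ) + ((1 + Y)⁻¹ - 1)).PosDef := by
    rw [one_add_shift]; exact hY.inv
  have h8 := bregman_f hX' hY'
  rw [transform_val hX, transform_val hY, transform_grad hX] at h8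
  have hdiff : ((1 + X)⁻¹ - 1) - ((1 + Y)⁻¹ - 1)
      = (1 + X)⁻¹ * (((1:Matrix n n ℝ) + Y) - (1 + X)) * (1 + Y)⁻¹ := by
    rw [← inv_sub_inv' huX huY]; abel
  rw [hdiff] at h8
  refine h8.trans (le_of_eq ?_)
  congr 1
  have e : ((1:Matrix n n ℝ) + Y) - (1 + X) = -(X - Y) := by abel
  rw [e]
  noncomm_ring

lemma hstep_f {X Y : Matrix n n ℝ} (hX : X.PosSemidef) (hY : Y.PosSemidef) :
    (X.trace - Real.log ((1 + X).det)) - (Y.trace - Real.log ((1 + Y).det))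
      ≤ matFrobNorm X * matFrobNorm (X - Y) := by
  have hXPD := psd_one_add_posDef hX
  have hYPD := psd_one_add_posDef hY
  have h := bregman_f hXPD hYPD
  refine h.trans ?_
  calc ((X * (1 + X)⁻¹) * (X - Y)).trace
      ≤ |((X * (1 + X)⁻¹) * (X - Y)).trace| := le_abs_self _
    _ ≤ matFrobNorm (X * (1 + X)⁻¹) * matFrobNorm (X - Y) := trace_abs_le _ _
    _ ≤ (matFrobNorm X * matOpNorm ((1 + X)⁻¹)) * matFrobNorm (X - Y) :=
        mul_le_mul_of_nonneg_right (frob_mul_op_right _ _ (inv_symm hXPD)) (frob_nonneg _)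
    _ ≤ matFrobNorm X * matFrobNorm (X - Y) := by
        have h2 : matFrobNorm X * matOpNorm ((1+X)⁻¹) ≤ matFrobNorm X * 1 :=
          mul_le_mul_of_nonneg_left (psd_op_inv_le_one hX) (frob_nonneg X)
        rw [mul_one] at h2
        exact mul_le_mul_of_nonneg_right h2 (frob_nonneg _)

lemma hstep_g {X Y : Matrix n n ℝ} (hX : X.PosSemidef) (hY : Y.PosSemidef) :
    (Real.log ((1 + X).det) - (X * (1 + X)⁻¹).trace)
      - (Real.log ((1 + Y).det) - (Y * (1 + Y)⁻¹).trace)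
      ≤ matFrobNorm X * matFrobNorm (X - Y) := by
  have hXPD := psd_one_add_posDef hX
  have hYPD := psd_one_add_posDef hY
  have h := bregman_g hXPD hYPD
  refine h.trans ?_
  have e1 : matFrobNorm (X * (1 + X)⁻¹) ≤ matFrobNorm X := by
    have := frob_mul_op_right X ((1+X)⁻¹) (inv_symm hXPD)
    nlinarith [psd_op_inv_le_one hX, frob_nonneg X, op_nonneg ((1+X)⁻¹)]
  have e2 : matFrobNorm ((X - Y) * (1 + Y)⁻¹) ≤ matFrobNorm (X - Y) := by
    have := frob_mul_op_right (X - Y) ((1+Y)⁻¹) (inv_symm hYPD)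
    nlinarith [psd_op_inv_le_one hY, frob_nonneg (X - Y), op_nonneg ((1+Y)⁻¹)]
  calc ((X * (1 + X)⁻¹) * ((X - Y) * (1 + Y)⁻¹)).trace
      ≤ |((X * (1 + X)⁻¹) * ((X - Y) * (1 + Y)⁻¹)).trace| := le_abs_self _
    _ ≤ matFrobNorm (X * (1 + X)⁻¹) * matFrobNorm ((X - Y) * (1 + Y)⁻¹) := trace_abs_le _ _
    _ ≤ matFrobNorm X * matFrobNorm (X - Y) :=
        mul_le_mul e1 e2 (frob_nonneg _) (frob_nonneg _)

lemma gauss_sum (m : ℕ) : ∑ i ∈ Finset.range m, ((i:ℝ) + 1) = m * (m + 1) / 2 := by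
  induction m with
  | zero => simp
  | succ k ih => rw [Finset.sum_range_succ, ih]; push_cast; ring

lemma riemann_aux (φ : Matrix n n ℝ → ℝ)
    (hstep : ∀ X Y : Matrix n n ℝ, X.PosSemidef → Y.PosSemidef →
      φ X - φ Y ≤ matFrobNorm X * matFrobNorm (X - Y))
    {A B : Matrix n n ℝ} (hA : A.PosSemidef) (hB : B.PosSemidef) :
    φ A - φ B ≤ 1/2 * (matFrobNorm A + matFrobNorm B) * matFrobNorm (A - B) := by
  set a := matFrobNorm A with ha
  set b := matFrobNorm B with hb
  set d := matFrobNorm (A - B) with hd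
  have ha0 : 0 ≤ a := frob_nonneg A
  have hb0 : 0 ≤ b := frob_nonneg B
  have hd0 : 0 ≤ d := frob_nonneg (A - B)
  refine le_of_forall_pos_le_add fun ε hε => ?_
  obtain ⟨N, hN⟩ := exists_nat_ge (|a - b| * d / (2 * ε))
  set m := N + 1 with hm
  have hmR : (0:ℝ) < (m:ℝ) := by positivity
  set M : ℕ → Matrix n n ℝ := fun i => B + ((i:ℝ)/(m:ℝ)) • (A - B) with hM
  have hMcc : ∀ i : ℕ, M i = (1 - (i:ℝ)/(m:ℝ)) • B + ((i:ℝ)/(m:ℝ)) • A := by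
    intro i; rw [hM]; simp only; rw [smul_sub, sub_smul, one_smul]; abel
  have hMpsd : ∀ i : ℕ, i ≤ m → (M i).PosSemidef := by
    intro i hi
    have ht0 : 0 ≤ (i:ℝ)/(m:ℝ) := by positivity
    have hle1 : (i:ℝ)/(m:ℝ) ≤ 1 := by
      rw [div_le_one hmR]; exact_mod_cast hi
    rw [hMcc i]
    exact (psd_smul hB (by linarith)).add (psd_smul hA ht0)
  have hfrobM : ∀ i : ℕ, i ≤ m →
      matFrobNorm (M i) ≤ (1 - (i:ℝ)/(m:ℝ)) * b + ((i:ℝ)/(m:ℝ)) * a := by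
    intro i hi
    have ht0 : 0 ≤ (i:ℝ)/(m:ℝ) := by positivity
    have hle1 : (i:ℝ)/(m:ℝ) ≤ 1 := by rw [div_le_one hmR]; exact_mod_cast hi
    rw [hMcc i]
    calc matFrobNorm ((1 - (i:ℝ)/(m:ℝ)) • B + ((i:ℝ)/(m:ℝ)) • A)
        ≤ matFrobNorm ((1 - (i:ℝ)/(m:ℝ)) • B) + matFrobNorm (((i:ℝ)/(m:ℝ)) • A) :=
          frob_add_le _ _
      _ = (1 - (i:ℝ)/(m:ℝ)) * b + ((i:ℝ)/(m:ℝ)) * a := by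
          rw [frob_smul, frob_smul, abs_of_nonneg (by linarith), abs_of_nonneg ht0, ← ha, ← hb]
  have hstepi : ∀ i : ℕ, i < m → φ (M (i+1)) - φ (M i)
      ≤ ((1 - ((i:ℝ)+1)/(m:ℝ)) * b + (((i:ℝ)+1)/(m:ℝ)) * a) * (d / (m:ℝ)) := by
    intro i hi
    have h := hstep (M (i+1)) (M i) (hMpsd _ (by omega)) (hMpsd _ (le_of_lt hi))
    have hdiff : M (i+1) - M i = ((1:ℝ)/(m:ℝ)) • (A - B) := by
      rw [hM]; simp only
      rw [add_sub_add_left_eq_sub, ← sub_smul]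
      congr 1
      push_cast
      ring
    have hFd : matFrobNorm (M (i+1) - M i) = d / (m:ℝ) := by
      rw [hdiff, frob_smul, abs_of_nonneg (by positivity), ← hd]; ring
    have hf := hfrobM (i+1) (by omega)
    rw [Nat.cast_add, Nat.cast_one] at hf
    rw [hFd] at h
    refine h.trans ?_
    exact mul_le_mul_of_nonneg_right hf (by positivity)
  have htel : φ A - φ B = ∑ i ∈ Finset.range m, (φ (M (i+1)) - φ (M i)) := by
    rw [Finset.sum_range_sub (fun i => φ (M i))]
    have hMm : M m = A := by
      rw [hM]; simp only
      rw [div_self hmR.ne', one_smul]; abel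
    have hM0 : M 0 = B := by rw [hM]; simp
    rw [hMm, hM0]
  have hsum : φ A - φ B
      ≤ ∑ i ∈ Finset.range m,
          ((1 - ((i:ℝ)+1)/(m:ℝ)) * b + (((i:ℝ)+1)/(m:ℝ)) * a) * (d/(m:ℝ)) := by
    rw [htel]
    exact Finset.sum_le_sum fun i hi => hstepi i (Finset.mem_range.1 hi)
  have hval : ∑ i ∈ Finset.range m,
      ((1 - ((i:ℝ)+1)/(m:ℝ)) * b + (((i:ℝ)+1)/(m:ℝ)) * a) * (d/(m:ℝ))
      = b * d + (a - b) * d * ((m:ℝ)+1) / (2*(m:ℝ)) := by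
    have expand : ∀ i ∈ Finset.range m,
        ((1 - ((i:ℝ)+1)/(m:ℝ)) * b + (((i:ℝ)+1)/(m:ℝ)) * a) * (d/(m:ℝ))
        = b * d / (m:ℝ) + ((i:ℝ)+1) * ((a-b) * d / (m:ℝ)^2) := by
      intro i _; field_simp; ring
    rw [Finset.sum_congr rfl expand, Finset.sum_add_distrib, Finset.sum_const,
      Finset.card_range, ← Finset.sum_mul, gauss_sum]
    rw [nsmul_eq_mul]
    field_simp
  have hNm : |a - b| * d / (2 * ε) ≤ (m:ℝ) := by
    have hc : (N:ℝ) ≤ (m:ℝ) := by exact_mod_cast Nat.le_succ N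
    linarith [hN]
  have hkey : (a - b) * d / (2 * (m:ℝ)) ≤ ε := by
    rw [div_le_iff₀ (by positivity)]
    rw [div_le_iff₀ (by positivity)] at hNm
    have habs : (a - b) * d ≤ |a - b| * d :=
      mul_le_mul_of_nonneg_right (le_abs_self _) hd0
    nlinarith
  calc φ A - φ B ≤ b*d + (a-b)*d*((m:ℝ)+1)/(2*(m:ℝ)) := by rw [← hval]; exact hsum
    _ = 1/2*(a+b)*d + (a-b)*d/(2*(m:ℝ)) := by field_simp; ring
    _ ≤ 1/2*(a+b)*d + ε := by linarith

lemma part1_aux {X Y : Matrix n n ℝ} (hX : ((1:Matrix n n ℝ)+X).PosDef)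
    (hY : ((1:Matrix n n ℝ)+Y).PosDef) :
    (X.trace - Real.log ((1 + X).det)) - (Y.trace - Real.log ((1 + Y).det))
      ≤ matOpNorm ((1 + X)⁻¹) * matOpNorm ((1 + Y)⁻¹) *
        (matFrobNorm X + matFrobNorm Y + matFrobNorm X * matFrobNorm Y)
        * matFrobNorm (X - Y) := by
  rcases isEmpty_or_nonempty n with hn | hn
  · have h0 : ∀ Z : Matrix n n ℝ, Z.trace = 0 := fun Z => by simp [Matrix.trace]
    have hdet : ∀ Z : Matrix n n ℝ, Z.det = 1 := fun Z => Matrix.det_isEmpty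
    have hfrob : matFrobNorm (X - Y) = 0 := by simp [matFrobNorm]
    rw [h0, h0, hdet, hdet, hfrob]
    simp
  · have h := bregman_f hX hY
    refine h.trans ?_
    have step1 : ((X * (1 + X)⁻¹) * (X - Y)).trace
        ≤ (matFrobNorm X * matOpNorm ((1 + X)⁻¹)) * matFrobNorm (X - Y) := by
      calc ((X * (1 + X)⁻¹) * (X - Y)).trace
          ≤ |((X * (1 + X)⁻¹) * (X - Y)).trace| := le_abs_self _
        _ ≤ matFrobNorm (X * (1 + X)⁻¹) * matFrobNorm (X - Y) := trace_abs_le _ _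
        _ ≤ _ := mul_le_mul_of_nonneg_right
              (frob_mul_op_right _ _ (inv_symm hX)) (frob_nonneg _)
    refine step1.trans ?_
    have h1 := one_le_inv_factor hY
    have hcX := op_nonneg ((1+X)⁻¹)
    have hcY := op_nonneg ((1+Y)⁻¹)
    have hFX := frob_nonneg X
    have hFY := frob_nonneg Y
    have hdnn := frob_nonneg (X - Y)
    have key := mul_le_mul_of_nonneg_left h1
      (mul_nonneg (mul_nonneg hFX hcX) hdnn)
    nlinarith [key, mul_nonneg (mul_nonneg (mul_nonneg hcX hcY) hFY) hdnn]

lemma part2_aux {X Y : Matrix n n ℝ} (hX : ((1:Matrix n n ℝ)+X).PosDef)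
    (hY : ((1:Matrix n n ℝ)+Y).PosDef) :
    (Real.log ((1 + X).det) - (X * (1 + X)⁻¹).trace)
      - (Real.log ((1 + Y).det) - (Y * (1 + Y)⁻¹).trace)
      ≤ matOpNorm ((1 + X)⁻¹) * matOpNorm ((1 + Y)⁻¹) *
        (matFrobNorm X + matFrobNorm Y + matFrobNorm X * matFrobNorm Y)
        * matFrobNorm (X - Y) := by
  have h := bregman_g hX hY
  refine h.trans ?_
  have hcX := op_nonneg ((1+X)⁻¹)
  have hcY := op_nonneg ((1+Y)⁻¹)
  have hFX := frob_nonneg X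
  have hFY := frob_nonneg Y
  have hdnn := frob_nonneg (X - Y)
  have step1 : ((X * (1 + X)⁻¹) * ((X - Y) * (1 + Y)⁻¹)).trace
      ≤ (matFrobNorm X * matOpNorm ((1 + X)⁻¹))
        * (matFrobNorm (X - Y) * matOpNorm ((1 + Y)⁻¹)) := by
    calc ((X * (1 + X)⁻¹) * ((X - Y) * (1 + Y)⁻¹)).trace
        ≤ |((X * (1 + X)⁻¹) * ((X - Y) * (1 + Y)⁻¹)).trace| := le_abs_self _
      _ ≤ matFrobNorm (X * (1 + X)⁻¹) * matFrobNorm ((X - Y) * (1 + Y)⁻¹) := trace_abs_le _ _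
      _ ≤ _ := mul_le_mul (frob_mul_op_right _ _ (inv_symm hX))
            (frob_mul_op_right _ _ (inv_symm hY)) (frob_nonneg _)
            (mul_nonneg hFX hcX)
  refine step1.trans ?_
  nlinarith [mul_nonneg (mul_nonneg (mul_nonneg hcX hcY) hFY) hdnn,
    mul_nonneg (mul_nonneg (mul_nonneg hcX hcY) (mul_nonneg hFX hFY)) hdnn]

end HCLip

theorem logdet_Hilbert_Carleman_lipschitz
    {n : Type*} [Fintype n] [DecidableEq n]
    (A B : Matrix n n ℝ) (hA : A.IsSymm) (hB : B.IsSymm)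
    (hposA : ((1 : Matrix n n ℝ) + A).PosDef) (hposB : ((1 : Matrix n n ℝ) + B).PosDef) :
    (|(A.trace - Real.log ((1 + A).det)) - (B.trace - Real.log ((1 + B).det))| ≤
      matOpNorm ((1 + A)⁻¹) * matOpNorm ((1 + B)⁻¹) *
        (matFrobNorm A + matFrobNorm B + matFrobNorm A * matFrobNorm B) *
        matFrobNorm (A - B)) ∧
    (|(Real.log ((1 + A).det) - (A * (1 + A)⁻¹).trace) -
        (Real.log ((1 + B).det) - (B * (1 + B)⁻¹).trace)| ≤
      matOpNorm ((1 + A)⁻¹) * matOpNorm ((1 + B)⁻¹) *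
        (matFrobNorm A + matFrobNorm B + matFrobNorm A * matFrobNorm B) *
        matFrobNorm (A - B)) ∧
    (A.PosSemidef → B.PosSemidef →
      |(A.trace - Real.log ((1 + A).det)) - (B.trace - Real.log ((1 + B).det))| ≤
        (1 / 2) * (matFrobNorm A + matFrobNorm B) * matFrobNorm (A - B) ∧
      |(Real.log ((1 + A).det) - (A * (1 + A)⁻¹).trace) -
          (Real.log ((1 + B).det) - (B * (1 + B)⁻¹).trace)| ≤
        (1 / 2) * (matFrobNorm A + matFrobNorm B) * matFrobNorm (A - B)) := by
  have hsymRHS : matOpNorm ((1 + B)⁻¹) * matOpNorm ((1 + A)⁻¹) *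
        (matFrobNorm B + matFrobNorm A + matFrobNorm B * matFrobNorm A) *
        matFrobNorm (B - A)
      = matOpNorm ((1 + A)⁻¹) * matOpNorm ((1 + B)⁻¹) *
        (matFrobNorm A + matFrobNorm B + matFrobNorm A * matFrobNorm B) *
        matFrobNorm (A - B) := by
    rw [HCLip.frob_sub_rev B A]; ring
  refine ⟨?_, ?_, fun hApsd hBpsd => ⟨?_, ?_⟩⟩
  · rw [abs_sub_le_iff]
    constructor
    · exact HCLip.part1_aux hposA hposB
    · have h := HCLip.part1_aux hposB hposA
      rw [hsymRHS] at h
      exact h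
  · rw [abs_sub_le_iff]
    constructor
    · exact HCLip.part2_aux hposA hposB
    · have h := HCLip.part2_aux hposB hposA
      rw [hsymRHS] at h
      exact h
  · have hsym3 : 1/2 * (matFrobNorm B + matFrobNorm A) * matFrobNorm (B - A)
        = 1/2 * (matFrobNorm A + matFrobNorm B) * matFrobNorm (A - B) := by
      rw [HCLip.frob_sub_rev B A]; ring
    rw [abs_sub_le_iff]
    constructor
    · exact HCLip.riemann_aux (fun Z => Z.trace - Real.log ((1 + Z).det))
        (fun X Y hX hY => HCLip.hstep_f hX hY) hApsd hBpsd
    · have h := HCLip.riemann_aux (fun Z => Z.trace - Real.log ((1 + Z).det))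
        (fun X Y hX hY => HCLip.hstep_f hX hY) hBpsd hApsd
      rw [hsym3] at h
      exact h
  · have hsym3 : 1/2 * (matFrobNorm B + matFrobNorm A) * matFrobNorm (B - A)
        = 1/2 * (matFrobNorm A + matFrobNorm B) * matFrobNorm (A - B) := by
      rw [HCLip.frob_sub_rev B A]; ring
    rw [abs_sub_le_iff]
    constructor
    · exact HCLip.riemann_aux (fun Z => Real.log ((1 + Z).det) - (Z * (1 + Z)⁻¹).trace)
        (fun X Y hX hY => HCLip.hstep_g hX hY) hApsd hBpsd
    · have h := HCLip.riemann_aux (fun Z => Real.log ((1 + Z).det) - (Z * (1 + Z)⁻¹).trace)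
        (fun X Y hX hY => HCLip.hstep_g hX hY) hBpsd hApsd
      rw [hsym3] at h
      exact h
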